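/- (Quantitative Gram–Schmidt on the sphere.) Let y¹, …, y^k ∈ ℝ^N each have norm √N and satisfy |⟨yⁱ, yʲ⟩| ≤ N^{2/3} for all i ≠ j. Then there exist pairwise orthogonal z¹, …, z^k, each of norm √N, with span(z¹, …, z^k) = span(y¹, …, y^k) and ⟨yⁱ, zⁱ⟩ ≥ N − 4k N^{1/3} for every i. -/

import Mathlib

open scoped BigOperators RealInnerProductSpace

set_option maxHeartbeats 1000000 in
/-- Quantitative Gram–Schmidt on the sphere: if `y¹, …, y^k ∈ ℝ^N` each have norm `√N`
and `|⟨yⁱ, yʲ⟩| ≤ N^{2/3}` for `i ≠ j` (with `N` large enough, e.g. `k³ ≤ N^{1/3}`),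
then there are pairwise orthogonal `z¹, …, z^k` of norm `√N` with the same span and
`⟨yⁱ, zⁱ⟩ ≥ N − 4 k N^{1/3}` for every `i`. -/
theorem stmt_9 (N k : ℕ) (hk : 0 < k) (hN : ((k : ℝ)) ^ 3 ≤ (N : ℝ) ^ ((1 : ℝ) / 3))
    (y : Fin k → EuclideanSpace ℝ (Fin N))
    (hnorm : ∀ i, ‖y i‖ = Real.sqrt N)
    (hip : ∀ i j, i ≠ j → |⟪y i, y j⟫| ≤ (N : ℝ) ^ ((2 : ℝ) / 3)) :
    ∃ z : Fin k → EuclideanSpace ℝ (Fin N),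
      (∀ i, ‖z i‖ = Real.sqrt N) ∧
      (∀ i j, i ≠ j → ⟪z i, z j⟫ = 0) ∧
      Submodule.span ℝ (Set.range z) = Submodule.span ℝ (Set.range y) ∧
      ∀ i, (N : ℝ) - 4 * k * (N : ℝ) ^ ((1 : ℝ) / 3) ≤ ⟪y i, z i⟫ := by
  haveI : NeZero k := ⟨hk.ne'⟩
  haveI : WellFoundedLT (Fin k) := inferInstance
  have hk1 : (1 : ℝ) ≤ (k : ℝ) := by exact_mod_cast hk
  have hNn : 0 < N := by
    rcases Nat.eq_zero_or_pos N with h0 | h0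
    · subst h0
      rw [Nat.cast_zero, Real.zero_rpow (by norm_num)] at hN
      nlinarith [hk1, sq_nonneg ((k : ℝ) - 1), sq_nonneg ((k : ℝ) + 1)]
    · exact h0
  have hN1 : (1 : ℝ) ≤ (N : ℝ) := by exact_mod_cast hNn
  have hNpos : (0 : ℝ) < N := by linarith
  set t : ℝ := (N : ℝ) ^ ((1 : ℝ) / 3) with ht
  set β : ℝ := (N : ℝ) ^ ((2 : ℝ) / 3) with hβ
  have hk13 : (1 : ℝ) ≤ (k : ℝ) ^ 3 := by
    nlinarith [hk1, sq_nonneg ((k : ℝ) - 1)]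
  have hx0 : (0 : ℝ) ≤ (k : ℝ) - 1 := by linarith
  have ht3 : t ^ 3 = (N : ℝ) := by
    rw [ht, ← Real.rpow_natCast ((N:ℝ) ^ ((1:ℝ)/3)) 3, ← Real.rpow_mul hNpos.le]
    norm_num
  have hβt : β = t ^ 2 := by
    rw [hβ, ht, ← Real.rpow_natCast ((N:ℝ) ^ ((1:ℝ)/3)) 2, ← Real.rpow_mul hNpos.le]
    norm_num
  have htpos : (0 : ℝ) < t := Real.rpow_pos_of_pos hNpos _
  have hk3t : (k : ℝ) ^ 3 ≤ t := hN
  have ht1 : (1 : ℝ) ≤ t := le_trans hk13 hk3t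
  have hβ1 : (1 : ℝ) ≤ β := by nlinarith
  -- 3(k-1)t ≤ N/4
  have hqN : 3 * ((k : ℝ) - 1) * t ≤ (N : ℝ) / 4 := by
    have h1 : 12 * ((k : ℝ) - 1) ≤ (k : ℝ) ^ 6 := by
      nlinarith [sq_nonneg ((k : ℝ) ^ 3 - 2), mul_nonneg (mul_nonneg hx0 hx0) (by linarith : (0:ℝ) ≤ (k:ℝ) + 2)]
    have h2 : (k : ℝ) ^ 6 ≤ t ^ 2 := by
      nlinarith [mul_self_le_mul_self (by positivity : (0:ℝ) ≤ (k:ℝ) ^ 3) hk3t]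
    nlinarith [ht3, mul_nonneg htpos.le (by linarith : (0:ℝ) ≤ t ^ 2 - 12 * ((k:ℝ) - 1))]
  -- 3(k-1)t ≤ β/2
  have hqβ : 3 * ((k : ℝ) - 1) * t ≤ β / 2 := by
    have h1 : 6 * ((k : ℝ) - 1) ≤ (k : ℝ) ^ 3 := by
      nlinarith [sq_nonneg ((k : ℝ) - 3/2), mul_nonneg (mul_nonneg hx0 hx0) hx0]
    have h2 : 6 * ((k : ℝ) - 1) ≤ t := le_trans h1 hk3t
    nlinarith [hβt, mul_nonneg htpos.le (by linarith : (0:ℝ) ≤ t - 6 * ((k:ℝ) - 1))]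
  set g : Fin k → EuclideanSpace ℝ (Fin N) := InnerProductSpace.gramSchmidt ℝ y with hg
  have horth : ∀ i j : Fin k, i ≠ j → ⟪g i, g j⟫ = 0 := fun i j hij =>
    InnerProductSpace.gramSchmidt_orthogonal ℝ y hij
  have hform : ∀ i : Fin k,
      g i = y i - ∑ j ∈ Finset.Iio i, (⟪g j, y i⟫ / ‖g j‖ ^ 2) • g j := by
    intro i
    rw [eq_sub_iff_add_eq]
    have h := InnerProductSpace.gramSchmidt_def'' ℝ y i
    simp only [RCLike.ofReal_real_eq_id, id_eq] at h
    exact h.symm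
  have hyy : ∀ i : Fin k, ⟪y i, y i⟫ = (N : ℝ) := by
    intro i
    rw [real_inner_self_eq_norm_sq, hnorm, Real.sq_sqrt hNpos.le]
  -- inner product formula
  have hinner : ∀ (i : Fin k) (w : EuclideanSpace ℝ (Fin N)),
      ⟪w, g i⟫ = ⟪w, y i⟫ - ∑ j ∈ Finset.Iio i, (⟪g j, y i⟫ / ‖g j‖ ^ 2) * ⟪w, g j⟫ := by
    intro i w
    rw [hform i, inner_sub_right, inner_sum]
    congr 1
    exact Finset.sum_congr rfl fun j _ => real_inner_smul_right _ _ _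
  have hself : ∀ i : Fin k, ⟪y i, g i⟫ = ‖g i‖ ^ 2 := by
    intro i
    have h := hinner i (g i)
    have hz : ∀ j ∈ Finset.Iio i, (⟪g j, y i⟫ / ‖g j‖ ^ 2) * ⟪g i, g j⟫ = 0 := by
      intro j hj
      rw [horth i j (Finset.mem_Iio.mp hj).ne', mul_zero]
    rw [Finset.sum_congr rfl hz, Finset.sum_const_zero, sub_zero] at h
    rw [real_inner_comm, ← h, real_inner_self_eq_norm_sq]
  clear_value t β g
  -- The key induction
  have key : ∀ n : ℕ, ∀ i : Fin k, (i : ℕ) = n →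
      ((N : ℝ) - 3 * ((k : ℝ) - 1) * t ≤ ‖g i‖ ^ 2) ∧
      (∀ m : Fin k, i < m → |⟪y m, g i⟫| ≤ 3 / 2 * β) := by
    intro n
    induction n using Nat.strong_induction_on with
    | _ n IH =>
    rintro i rfl
    have IH' : ∀ j : Fin k, j < i →
        ((N : ℝ) - 3 * ((k : ℝ) - 1) * t ≤ ‖g j‖ ^ 2) ∧
        (∀ m : Fin k, j < m → |⟪y m, g j⟫| ≤ 3 / 2 * β) := fun j hj =>
      IH j (Fin.lt_iff_val_lt_val.mp hj) j rfl
    have hgj34 : ∀ j : Fin k, j < i → 3 / 4 * (N : ℝ) ≤ ‖g j‖ ^ 2 := by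
      intro j hj
      have := (IH' j hj).1
      linarith
    have hygj : ∀ j : Fin k, j < i → |⟪y i, g j⟫| ≤ 3 / 2 * β :=
      fun j hj => (IH' j hj).2 i hj
    -- card bound
    have hcard : ((Finset.Iio i).card : ℝ) ≤ (k : ℝ) - 1 := by
      rw [Fin.card_Iio]
      have : (i : ℕ) + 1 ≤ k := i.isLt
      have : ((i : ℕ) : ℝ) + 1 ≤ (k : ℝ) := by exact_mod_cast this
      linarith
    -- generic term bound
    have hterm : ∀ (j : Fin k), j < i → ∀ c : ℝ, |c| ≤ 3 / 2 * β →
        |(⟪g j, y i⟫ / ‖g j‖ ^ 2) * c| ≤ 3 * t := by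
      intro j hj c hc
      have hb : 3 / 4 * (N : ℝ) ≤ ‖g j‖ ^ 2 := hgj34 j hj
      have hbpos : (0 : ℝ) < ‖g j‖ ^ 2 := by linarith
      have h1 : |(⟪g j, y i⟫ / ‖g j‖ ^ 2) * c| = |⟪g j, y i⟫| * |c| / ‖g j‖ ^ 2 := by
        rw [abs_mul, abs_div, abs_of_pos hbpos]
        ring
      rw [h1]
      have h2 : |⟪g j, y i⟫| * |c| ≤ (3 / 2 * β) * (3 / 2 * β) := by
        have := hygj j hj
        rw [real_inner_comm]
        exact mul_le_mul this hc (abs_nonneg _) (by positivity)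
      have h3 : |⟪g j, y i⟫| * |c| / ‖g j‖ ^ 2 ≤ (3 / 2 * β) * (3 / 2 * β) / (3 / 4 * N) :=
        div_le_div₀ (by positivity) h2 (by linarith) hb
      refine h3.trans ?_
      rw [div_le_iff₀ (by linarith)]
      nlinarith [hβt, ht3]
    constructor
    · -- norm lower bound
      have h := hinner i (y i)
      rw [hyy i] at h
      have hsum : ∑ j ∈ Finset.Iio i, (⟪g j, y i⟫ / ‖g j‖ ^ 2) * ⟪y i, g j⟫
          ≤ 3 * ((k : ℝ) - 1) * t := by
        calc ∑ j ∈ Finset.Iio i, (⟪g j, y i⟫ / ‖g j‖ ^ 2) * ⟪y i, g j⟫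
            ≤ ∑ j ∈ Finset.Iio i, (3 * t) := by
              refine Finset.sum_le_sum fun j hj => ?_
              have hj' := Finset.mem_Iio.mp hj
              have := hterm j hj' (⟪y i, g j⟫) (hygj j hj')
              exact (le_abs_self _).trans this
          _ = (Finset.Iio i).card * (3 * t) := by rw [Finset.sum_const, nsmul_eq_mul]
          _ ≤ ((k : ℝ) - 1) * (3 * t) := by
              apply mul_le_mul_of_nonneg_right hcard (by positivity)
          _ = 3 * ((k : ℝ) - 1) * t := by ring
      rw [← hself i, h]
      linarith
    · -- future inner products
      intro m him
      have h := hinner i (y m)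
      have h0 : |⟪y m, y i⟫| ≤ β := hip m i him.ne'
      have hsum : |∑ j ∈ Finset.Iio i, (⟪g j, y i⟫ / ‖g j‖ ^ 2) * ⟪y m, g j⟫|
          ≤ 3 * ((k : ℝ) - 1) * t := by
        calc |∑ j ∈ Finset.Iio i, (⟪g j, y i⟫ / ‖g j‖ ^ 2) * ⟪y m, g j⟫|
            ≤ ∑ j ∈ Finset.Iio i, |(⟪g j, y i⟫ / ‖g j‖ ^ 2) * ⟪y m, g j⟫| :=
              Finset.abs_sum_le_sum_abs _ _
          _ ≤ ∑ j ∈ Finset.Iio i, (3 * t) := by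
              refine Finset.sum_le_sum fun j hj => ?_
              have hj' := Finset.mem_Iio.mp hj
              exact hterm j hj' _ ((IH' j hj').2 m (hj'.trans him))
          _ = (Finset.Iio i).card * (3 * t) := by rw [Finset.sum_const, nsmul_eq_mul]
          _ ≤ ((k : ℝ) - 1) * (3 * t) := mul_le_mul_of_nonneg_right hcard (by positivity)
          _ = 3 * ((k : ℝ) - 1) * t := by ring
      calc |⟪y m, g i⟫| = |⟪y m, y i⟫ - ∑ j ∈ Finset.Iio i, (⟪g j, y i⟫ / ‖g j‖ ^ 2) * ⟪y m, g j⟫| := by rw [h]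
        _ ≤ |⟪y m, y i⟫| + |∑ j ∈ Finset.Iio i, (⟪g j, y i⟫ / ‖g j‖ ^ 2) * ⟪y m, g j⟫| :=
            abs_sub _ _
        _ ≤ β + 3 * ((k : ℝ) - 1) * t := add_le_add h0 hsum
        _ ≤ β + β / 2 := by linarith
        _ = 3 / 2 * β := by ring
  -- consequences
  have hglb : ∀ i : Fin k, (N : ℝ) - 3 * ((k : ℝ) - 1) * t ≤ ‖g i‖ ^ 2 :=
    fun i => (key i i rfl).1
  have hg34 : ∀ i : Fin k, 3 / 4 * (N : ℝ) ≤ ‖g i‖ ^ 2 := by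
    intro i
    have := hglb i
    linarith
  have hgpos : ∀ i : Fin k, (0 : ℝ) < ‖g i‖ := by
    intro i
    have h2 : (0 : ℝ) < ‖g i‖ ^ 2 := lt_of_lt_of_le (by linarith) (hg34 i)
    have : ‖g i‖ ≠ 0 := by
      intro h
      rw [h] at h2
      norm_num at h2
    exact (norm_nonneg _).lt_of_ne' this
  have hsqrtN : (0 : ℝ) < Real.sqrt N := Real.sqrt_pos.mpr hNpos
  -- define z
  refine ⟨fun i => (Real.sqrt N / ‖g i‖) • g i, ?_, ?_, ?_, ?_⟩
  · intro i
    rw [norm_smul, Real.norm_eq_abs, abs_of_pos (div_pos hsqrtN (hgpos i)),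
      div_mul_cancel₀ _ (hgpos i).ne']
  · intro i j hij
    rw [real_inner_smul_left, real_inner_smul_right, horth i j hij, mul_zero, mul_zero]
  · have hspan1 : Submodule.span ℝ (Set.range fun i => (Real.sqrt N / ‖g i‖) • g i)
        = Submodule.span ℝ (Set.range g) := by
      apply le_antisymm
      · rw [Submodule.span_le]
        rintro _ ⟨i, rfl⟩
        exact Submodule.smul_mem _ _ (Submodule.subset_span ⟨i, rfl⟩)
      · rw [Submodule.span_le]
        rintro _ ⟨i, rfl⟩
        have : g i = (‖g i‖ / Real.sqrt N) • ((Real.sqrt N / ‖g i‖) • g i) := by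
          have hc1 : (‖g i‖ / Real.sqrt N) * (Real.sqrt N / ‖g i‖) = 1 := by
            field_simp [(hgpos i).ne', hsqrtN.ne']
          rw [smul_smul, hc1, one_smul]
        rw [this]
        exact Submodule.smul_mem _ _ (Submodule.subset_span ⟨i, rfl⟩)
    rw [hspan1, hg, InnerProductSpace.span_gramSchmidt]
  · intro i
    have h1 : ⟪y i, (Real.sqrt N / ‖g i‖) • g i⟫ = Real.sqrt N * ‖g i‖ := by
      rw [real_inner_smul_right, hself i, pow_two, div_mul_eq_mul_div, mul_comm (‖g i‖),
        ← mul_assoc, mul_div_assoc, div_self (hgpos i).ne', mul_one]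
    rw [h1]
    by_cases hc : (N : ℝ) - 4 * k * t ≤ 0
    · exact hc.trans (by positivity)
    · push_neg at hc
      have ha : (N : ℝ) - 4 * k * t ≤ ‖g i‖ ^ 2 := by
        have := hglb i
        nlinarith [htpos]
      have h2 : Real.sqrt N * ‖g i‖ = Real.sqrt ((N : ℝ) * ‖g i‖ ^ 2) := by
        rw [Real.sqrt_mul hNpos.le, Real.sqrt_sq (norm_nonneg _)]
      rw [h2]
      have h3 : ((N : ℝ) - 4 * k * t) ^ 2 ≤ (N : ℝ) * ‖g i‖ ^ 2 := by
        have h4 : (0 : ℝ) ≤ 4 * (k : ℝ) * t := by positivity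
        nlinarith [mul_le_mul_of_nonneg_left ha hNpos.le, mul_nonneg hc.le h4]
      calc (N : ℝ) - 4 * k * t = Real.sqrt (((N : ℝ) - 4 * k * t) ^ 2) := by
            rw [Real.sqrt_sq hc.le]
        _ ≤ Real.sqrt ((N : ℝ) * ‖g i‖ ^ 2) := Real.sqrt_le_sqrt h3
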